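/- Under the hypotheses of the previous one-parameter corollary (independent non-decreasing processes Zᴺᵢ on [0,T] with E[|Zᴺᵢ(T)−Zᴺᵢ(0)|^q]^{1/q} ≤ Mᴺ and Hölder-r expectations), if {Mᴺ, w̄ᴺ} is bounded and (q² − 2q − 2)r > 2, then almost surely lim_{N→∞} sup_{0≤t₁≤t₂≤T} |(1/N)Σᵢ₌₁ᴺ (Zᴺᵢ(t₂) − Zᴺᵢ(t₁) − E[Zᴺᵢ(t₂) − Zᴺᵢ(t₁)])| = 0. -/

import Mathlib

open MeasureTheory ProbabilityTheory Filter

section Helpers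

variable {Ω : Type*} [MeasurableSpace Ω] {μ : Measure Ω}

lemma integrable_of_abs_le [IsProbabilityMeasure μ] {f : Ω → ℝ} {C : ℝ}
    (hf : Measurable f) (h : ∀ ω, |f ω| ≤ C) : Integrable f μ :=
  (integrable_const C).mono' hf.aestronglyMeasurable
    (ae_of_all _ fun ω => by simpa [Real.norm_eq_abs] using h ω)

lemma indep_pow_integral {S W : Ω → ℝ} (h : IndepFun S W μ) (hS : Measurable S)
    (hW : Measurable W) (m n : ℕ) :
    ∫ ω, (S ω)^m * (W ω)^n ∂μ = (∫ ω, (S ω)^m ∂μ) * ∫ ω, (W ω)^n ∂μ := by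
  have := (h.comp (measurable_id.pow_const m) (measurable_id.pow_const n)).integral_mul_eq_mul_integral
    ((hS.pow_const m).aestronglyMeasurable) ((hW.pow_const n).aestronglyMeasurable)
  simpa [Function.comp_def] using this

lemma moment24 [IsProbabilityMeasure μ] {ι : Type*} [DecidableEq ι] {Y : ι → Ω → ℝ} {b v : ℝ}
    (hb : 0 ≤ b) (hv : 0 ≤ v)
    (hYm : ∀ i, Measurable (Y i))
    (hYb : ∀ i ω, |Y i ω| ≤ b)
    (hY0 : ∀ i, ∫ ω, Y i ω ∂μ = 0)
    (hY2 : ∀ i, ∫ ω, (Y i ω)^2 ∂μ ≤ v)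
    (hind : iIndepFun Y μ)
    (s : Finset ι) :
    (∫ ω, (∑ i ∈ s, Y i ω)^2 ∂μ ≤ s.card * v) ∧
    (∫ ω, (∑ i ∈ s, Y i ω)^4 ∂μ ≤ 3*((s.card : ℝ)*v)^2 + s.card * b^2*v) := by
  induction s using Finset.induction_on with
  | empty => simp
  | @insert a s ha ih =>
    set W : Ω → ℝ := Y a with hWdef
    set S : Ω → ℝ := fun ω => ∑ i ∈ s, Y i ω with hSdef
    have hSm : Measurable S := Finset.measurable_sum s (fun i _ => hYm i)
    have hWm : Measurable W := hYm a
    have hSb : ∀ ω, |S ω| ≤ (s.card : ℝ) * b := fun ω => by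
      calc |S ω| ≤ ∑ i ∈ s, |Y i ω| := Finset.abs_sum_le_sum_abs _ _
        _ ≤ ∑ _i ∈ s, b := Finset.sum_le_sum fun i _ => hYb i ω
        _ = (s.card : ℝ) * b := by rw [Finset.sum_const, nsmul_eq_mul]
    have hIS : IndepFun S W μ := by
      have h := hind.indepFun_finset_sum_of_notMem hYm ha
      have h2 : (∑ j ∈ s, Y j) = S := by funext ω; simp [hSdef]
      rwa [h2] at h
    -- integrabilities
    have hint : ∀ m n : ℕ, Integrable (fun ω => (S ω)^m * (W ω)^n) μ := by
      intro m n
      refine integrable_of_abs_le ((hSm.pow_const m).mul (hWm.pow_const n))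
        (C := ((s.card : ℝ)*b)^m * b^n) (fun ω => ?_)
      rw [abs_mul, abs_pow, abs_pow]
      exact mul_le_mul (pow_le_pow_left₀ (abs_nonneg _) (hSb ω) m)
        (pow_le_pow_left₀ (abs_nonneg _) (hYb a ω) n) (pow_nonneg (abs_nonneg _) n)
        (pow_nonneg (mul_nonneg (Nat.cast_nonneg _) hb) m)
    have hintS : ∀ m : ℕ, Integrable (fun ω => (S ω)^m) μ := fun m => by
      simpa using hint m 0
    have hintW : ∀ n : ℕ, Integrable (fun ω => (W ω)^n) μ := fun n => by
      simpa using hint 0 n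
    have hcross : ∀ m n : ℕ, ∫ ω, (S ω)^m * (W ω)^n ∂μ
        = (∫ ω, (S ω)^m ∂μ) * ∫ ω, (W ω)^n ∂μ := indep_pow_integral hIS hSm hWm
    -- basic integrals
    have hS0 : ∫ ω, S ω ∂μ = 0 := by
      rw [hSdef, integral_finset_sum s (fun i _ => integrable_of_abs_le (hYm i) (hYb i))]
      simp [hY0]
    have hW0 : ∫ ω, W ω ∂μ = 0 := hY0 a
    have hS2nn : 0 ≤ ∫ ω, (S ω)^2 ∂μ := integral_nonneg fun ω => sq_nonneg _
    have hW2nn : 0 ≤ ∫ ω, (W ω)^2 ∂μ := integral_nonneg fun ω => sq_nonneg _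
    have hW4 : ∫ ω, (W ω)^4 ∂μ ≤ b^2 * v := by
      have h1 : ∀ ω, (W ω)^4 ≤ b^2 * (W ω)^2 := fun ω => by
        have h2 : (W ω)^2 ≤ b^2 := by
          rw [← sq_abs]; exact pow_le_pow_left₀ (abs_nonneg _) (hYb a ω) 2
        nlinarith [sq_nonneg (W ω)]
      calc ∫ ω, (W ω)^4 ∂μ ≤ ∫ ω, b^2 * (W ω)^2 ∂μ :=
            integral_mono (hintW 4) ((hintW 2).const_mul _) h1
        _ = b^2 * ∫ ω, (W ω)^2 ∂μ := integral_const_mul _ _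
        _ ≤ b^2 * v := by
            exact mul_le_mul_of_nonneg_left (hY2 a) (sq_nonneg b)
    -- the sum over insert
    have hsum : ∀ ω, (∑ i ∈ insert a s, Y i ω) = W ω + S ω := fun ω => by
      rw [Finset.sum_insert ha]
    have hcard : ((insert a s).card : ℝ) = (s.card : ℝ) + 1 := by
      rw [Finset.card_insert_of_notMem ha]; push_cast; ring
    have hcS2 : ∫ ω, (S ω)^2 ∂μ ≤ (s.card : ℝ) * v := ih.1
    have hcS4 : ∫ ω, (S ω)^4 ∂μ ≤ 3*((s.card : ℝ)*v)^2 + s.card * b^2*v := ih.2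
    constructor
    · have i2 : ∫ ω, (∑ i ∈ insert a s, Y i ω)^2 ∂μ
          = ∫ ω, (S ω)^2 ∂μ + 2*((∫ ω, (S ω)^1 ∂μ) * ∫ ω, (W ω)^1 ∂μ) + ∫ ω, (W ω)^2 ∂μ := by
        rw [show (fun ω => (∑ i ∈ insert a s, Y i ω)^2)
            = fun ω => ((S ω)^2 + 2*((S ω)^1*(W ω)^1)) + (W ω)^2 from
          funext fun ω => by rw [hsum ω]; ring]
        have hA : Integrable (fun ω => (S ω)^2 + 2*((S ω)^1*(W ω)^1)) μ :=
          (hintS 2).add ((hint 1 1).const_mul 2)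
        rw [integral_add hA (hintW 2),
          integral_add (hintS 2) ((hint 1 1).const_mul 2), integral_const_mul, hcross 1 1]
      rw [i2]
      simp only [pow_one, hS0, hW0]
      rw [hcard]
      nlinarith [hY2 a]
    · have i4 : ∫ ω, (∑ i ∈ insert a s, Y i ω)^4 ∂μ
          = ∫ ω, (S ω)^4 ∂μ
            + 4*((∫ ω, (S ω)^3 ∂μ) * ∫ ω, (W ω)^1 ∂μ)
            + 6*((∫ ω, (S ω)^2 ∂μ) * ∫ ω, (W ω)^2 ∂μ)
            + 4*((∫ ω, (S ω)^1 ∂μ) * ∫ ω, (W ω)^3 ∂μ)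
            + ∫ ω, (W ω)^4 ∂μ := by
        rw [show (fun ω => (∑ i ∈ insert a s, Y i ω)^4)
            = fun ω => ((((S ω)^4 + 4*((S ω)^3*(W ω)^1)) + 6*((S ω)^2*(W ω)^2))
                + 4*((S ω)^1*(W ω)^3)) + (W ω)^4 from
          funext fun ω => by rw [hsum ω]; ring]
        have hB1 : Integrable (fun ω => (S ω)^4 + 4*((S ω)^3*(W ω)^1)) μ :=
          (hintS 4).add ((hint 3 1).const_mul 4)
        have hB2 : Integrable (fun ω => ((S ω)^4 + 4*((S ω)^3*(W ω)^1)) + 6*((S ω)^2*(W ω)^2)) μ :=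
          hB1.add ((hint 2 2).const_mul 6)
        have hB3 : Integrable (fun ω => (((S ω)^4 + 4*((S ω)^3*(W ω)^1)) + 6*((S ω)^2*(W ω)^2))
            + 4*((S ω)^1*(W ω)^3)) μ := hB2.add ((hint 1 3).const_mul 4)
        rw [integral_add hB3 (hintW 4), integral_add hB2 ((hint 1 3).const_mul 4),
          integral_add hB1 ((hint 2 2).const_mul 6),
          integral_add (hintS 4) ((hint 3 1).const_mul 4),
          integral_const_mul, integral_const_mul, integral_const_mul,
          hcross 3 1, hcross 2 2, hcross 1 3]
      rw [i4]
      simp only [pow_one, hS0, hW0]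
      rw [hcard]
      have h6 : (∫ ω, (S ω)^2 ∂μ) * (∫ ω, (W ω)^2 ∂μ) ≤ ((s.card : ℝ) * v) * v :=
        mul_le_mul hcS2 (hY2 a) hW2nn (mul_nonneg (Nat.cast_nonneg _) hv)
      nlinarith [Nat.cast_nonneg (α := ℝ) s.card, sq_nonneg v, sq_nonneg b]

end Helpers
section Key

open MeasureTheory ProbabilityTheory Filter

variable {Ω : Type*} [MeasurableSpace Ω]

lemma markov_ofReal {μ : Measure Ω} [IsProbabilityMeasure μ] {f : Ω → ℝ} {a : ℝ}
    (hfi : Integrable f μ) (hf0 : ∀ ω, 0 ≤ f ω) (ha : 0 < a) :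
    μ {ω | a ≤ f ω} ≤ ENNReal.ofReal ((∫ ω, f ω ∂μ) / a) := by
  have h := mul_meas_ge_le_integral_of_nonneg (ae_of_all μ hf0) hfi a
  have h2 : (μ {ω | a ≤ f ω}).toReal ≤ (∫ ω, f ω ∂μ) / a := by
    rw [le_div_iff₀ ha, mul_comm]; exact h
  calc μ {ω | a ≤ f ω} = ENNReal.ofReal ((μ {ω | a ≤ f ω}).toReal) :=
        (ENNReal.ofReal_toReal (measure_ne_top μ _)).symm
    _ ≤ ENNReal.ofReal ((∫ ω, f ω ∂μ) / a) := ENNReal.ofReal_le_ofReal h2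

set_option maxHeartbeats 2000000 in
lemma key_eventually (μ : Measure Ω) [IsProbabilityMeasure μ] (q C : ℝ) (hq : 2 < q) (hC : 1 ≤ C)
    (W R : (N : ℕ) → Fin N → Ω → ℝ)
    (hWm : ∀ N i, Measurable (W N i))
    (hWnn : ∀ N i ω, 0 ≤ W N i ω)
    (hWR : ∀ N i ω, W N i ω ≤ R N i ω)
    (hRint : ∀ N i, Integrable (fun ω => R N i ω ^ q) μ)
    (hRq : ∀ N i, ∫ ω, R N i ω ^ q ∂μ ≤ C)
    (hind : ∀ N, iIndepFun (W N) μ)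
    (ε : ℝ) (hε : 0 < ε) :
    ∀ᵐ ω ∂μ, ∀ᶠ N : ℕ in atTop,
      |∑ i, (W N i ω - ∫ ω', W N i ω' ∂μ)| ≤ (N : ℝ) * ε := by
  have hq0 : (0:ℝ) < q := by linarith
  have hCpos : (0:ℝ) < C := by linarith
  set α : ℝ := 1/2 + 1/q with hαdef
  have hα : 0 < α := by positivity
  have hα1 : α < 1 := by
    have h12 : 1/q < 1/2 := by
      rw [div_lt_div_iff₀ hq0 (by norm_num)]; linarith
    simp only [hαdef]; linarith
  have hαq : 2 < α * q := by
    have hh : α * q = q/2 + 1 := by rw [hαdef]; field_simp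
    rw [hh]; linarith
  -- pointwise facts
  have hRnn : ∀ N i ω, 0 ≤ R N i ω := fun N i ω => (hWnn N i ω).trans (hWR N i ω)
  have claimA : ∀ x : ℝ, 0 ≤ x → x ≤ 1 + x ^ q := by
    intro x hx
    rcases le_or_gt x 1 with h | h
    · have : (0:ℝ) ≤ x ^ q := Real.rpow_nonneg hx q
      linarith
    · calc x = x ^ (1:ℝ) := (Real.rpow_one x).symm
        _ ≤ x ^ q := Real.rpow_le_rpow_of_exponent_le h.le (by linarith)
        _ ≤ 1 + x ^ q := by linarith
  have claimB : ∀ x : ℝ, 0 ≤ x → x^2 ≤ 1 + x ^ q := by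
    intro x hx
    rcases le_or_gt x 1 with h | h
    · have h2 : x^2 ≤ 1 := pow_le_one₀ hx h
      have : (0:ℝ) ≤ x ^ q := Real.rpow_nonneg hx q
      linarith
    · have e : x ^ ((2:ℕ):ℝ) = x ^ (2:ℕ) := Real.rpow_natCast x 2
      calc x^2 = x ^ ((2:ℕ):ℝ) := by rw [e]
        _ ≤ x ^ q := Real.rpow_le_rpow_of_exponent_le h.le (by push_cast; linarith)
        _ ≤ 1 + x ^ q := by linarith
  have hWq_le : ∀ N i ω, (W N i ω) ^ q ≤ (R N i ω) ^ q := fun N i ω =>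
    Real.rpow_le_rpow (hWnn N i ω) (hWR N i ω) hq0.le
  have hW_le : ∀ N i ω, W N i ω ≤ 1 + (R N i ω) ^ q := fun N i ω =>
    (claimA _ (hWnn N i ω)).trans (by linarith [hWq_le N i ω])
  have hW2_le : ∀ N i ω, (W N i ω)^2 ≤ 1 + (R N i ω) ^ q := fun N i ω =>
    (claimB _ (hWnn N i ω)).trans (by linarith [hWq_le N i ω])
  have hOneR : ∀ N i, Integrable (fun ω => 1 + (R N i ω) ^ q) μ := fun N i =>
    (integrable_const 1).add (hRint N i)
  have hWint : ∀ N i, Integrable (W N i) μ := fun N i =>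
    (hOneR N i).mono' (hWm N i).aestronglyMeasurable
      (ae_of_all _ fun ω => by
        rw [Real.norm_eq_abs, abs_of_nonneg (hWnn N i ω)]; exact hW_le N i ω)
  have hIR : ∀ N i, ∫ ω, (1 + (R N i ω) ^ q) ∂μ ≤ 1 + C := fun N i => by
    rw [integral_add (integrable_const 1) (hRint N i)]
    simp only [integral_const, measure_univ, probReal_univ, smul_eq_mul, one_mul]
    linarith [hRq N i]
  -- threshold
  obtain ⟨N₁, hN₁⟩ : ∃ N₁ : ℕ, ∀ N ≥ N₁, 1 ≤ N ∧ C * (N:ℝ) ^ (α*(1-q)) ≤ ε/2 := by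
    have ht : Tendsto (fun N : ℕ => C * (N:ℝ) ^ (α*(1-q))) atTop (nhds (C * 0)) := by
      apply Tendsto.const_mul
      have h1 : Tendsto (fun x : ℝ => x ^ (-(α*(q-1)))) atTop (nhds 0) :=
        tendsto_rpow_neg_atTop (by nlinarith)
      have h2 := h1.comp (tendsto_natCast_atTop_atTop (R := ℝ))
      convert h2 using 2 with N
      simp only [Function.comp_apply]
      ring_nf
    rw [mul_zero] at ht
    have h3 := ht.eventually_lt_const (half_pos hε)
    obtain ⟨N₁, h4⟩ := (h3.and (eventually_ge_atTop 1)).exists_forall_of_atTop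
    exact ⟨N₁, fun N hN => ⟨(h4 N hN).2, (h4 N hN).1.le⟩⟩
  classical
  set c : ℕ → ℝ := fun N => (N:ℝ) ^ α with hcdef
  set v : ℝ := 1 + C with hvdef
  have hv1 : 1 ≤ v := by simp only [hvdef]; linarith
  have hv0 : 0 < v := by linarith
  set m : (N:ℕ) → Fin N → ℝ := fun N i => ∫ ω, min (W N i ω) (c N) ∂μ with hmdef
  set Y : (N:ℕ) → Fin N → Ω → ℝ := fun N i ω => min (W N i ω) (c N) - m N i with hYdef
  set D : ℕ → Set Ω := fun N => {ω | (N:ℝ)*ε < |∑ i, (W N i ω - ∫ ω', W N i ω' ∂μ)|} with hDdef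
  set s : ℕ → Set Ω := fun N => if N₁ ≤ N then D N else ∅ with hsdef
  set u : ℕ → ℝ := fun N => C * (N:ℝ)^(1-α*q)
    + (16/ε^4) * (3*v^2*(N:ℝ)^(-2:ℝ) + 2*v*(N:ℝ)^(2*α-3) + 2*v^3*(N:ℝ)^(-3:ℝ)) with hudef
  have hunn : ∀ N, 0 ≤ u N := by
    intro N
    have h1 : (0:ℝ) ≤ (N:ℝ)^(1-α*q) := Real.rpow_nonneg (Nat.cast_nonneg N) _
    have h2 : (0:ℝ) ≤ (N:ℝ)^(-2:ℝ) := Real.rpow_nonneg (Nat.cast_nonneg N) _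
    have h3 : (0:ℝ) ≤ (N:ℝ)^(2*α-3) := Real.rpow_nonneg (Nat.cast_nonneg N) _
    have h4 : (0:ℝ) ≤ (N:ℝ)^(-3:ℝ) := Real.rpow_nonneg (Nat.cast_nonneg N) _
    simp only [hudef]
    have := hε
    positivity
  -- per-N bound
  have hμD : ∀ N, N₁ ≤ N → μ (D N) ≤ ENNReal.ofReal (u N) := by
    intro N hN
    obtain ⟨hN1, hsmall⟩ := hN₁ N hN
    have hNR : (1:ℝ) ≤ (N:ℝ) := by exact_mod_cast hN1
    have hNpos : (0:ℝ) < N := by linarith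
    have hc1 : 1 ≤ c N := Real.one_le_rpow hNR hα.le
    have hcpos : 0 < c N := by linarith
    have hmin_nn : ∀ (i : Fin N) ω, 0 ≤ min (W N i ω) (c N) := fun i ω =>
      le_min (hWnn N i ω) hcpos.le
    have hminabs : ∀ (i : Fin N) ω, |min (W N i ω) (c N)| ≤ c N := fun i ω =>
      abs_le.mpr ⟨by linarith [hmin_nn i ω], min_le_right _ _⟩
    have hmintR : ∀ i : Fin N, Integrable (fun ω => min (W N i ω) (c N)) μ := fun i =>
      integrable_of_abs_le ((hWm N i).min measurable_const) (hminabs i)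
    have hm0 : ∀ i, 0 ≤ m N i := fun i => integral_nonneg (fun ω => hmin_nn i ω)
    have hmv : ∀ i, m N i ≤ v := fun i => by
      have h1 : ∀ ω, min (W N i ω) (c N) ≤ 1 + (R N i ω)^q := fun ω =>
        (min_le_left _ _).trans (hW_le N i ω)
      calc m N i ≤ ∫ ω, (1 + (R N i ω)^q) ∂μ := integral_mono (hmintR i) (hOneR N i) h1
        _ ≤ v := hIR N i
    have hYmeas : ∀ i, Measurable (Y N i) := fun i =>
      (((hWm N i).min measurable_const).sub measurable_const)
    have hYb : ∀ (i : Fin N) ω, |Y N i ω| ≤ c N + v := fun i ω => by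
      have h1 := hmin_nn i ω
      have h2 := min_le_right (W N i ω) (c N)
      have h3 := hm0 i; have h4 := hmv i
      have hYe : Y N i ω = min (W N i ω) (c N) - m N i := rfl
      rw [hYe, abs_le]
      constructor <;> linarith
    have hY0 : ∀ i, ∫ ω, Y N i ω ∂μ = 0 := fun i => by
      have hYe : (fun ω => Y N i ω) = fun ω => min (W N i ω) (c N) - m N i := rfl
      rw [hYe, integral_sub (hmintR i) (integrable_const _)]
      simp only [integral_const, measure_univ, probReal_univ, smul_eq_mul, one_mul]
      have hmm : ∫ ω, min (W N i ω) (c N) ∂μ = m N i := rfl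
      rw [hmm, sub_self]
    have hmin2int : ∀ i : Fin N, Integrable (fun ω => (min (W N i ω) (c N))^2) μ := fun i =>
      integrable_of_abs_le (((hWm N i).min measurable_const).pow_const 2)
        (C := (c N)^2) (fun ω => by
          rw [abs_pow]
          exact pow_le_pow_left₀ (abs_nonneg _) (hminabs i ω) 2)
    have hmin2v : ∀ i, ∫ ω, (min (W N i ω) (c N))^2 ∂μ ≤ v := fun i => by
      have h1 : ∀ ω, (min (W N i ω) (c N))^2 ≤ 1 + (R N i ω)^q := fun ω => by
        have h2 : (min (W N i ω) (c N))^2 ≤ (W N i ω)^2 := by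
          have h3 := hmin_nn i ω
          have h4 := min_le_left (W N i ω) (c N)
          nlinarith
        linarith [hW2_le N i ω]
      calc ∫ ω, (min (W N i ω) (c N))^2 ∂μ ≤ ∫ ω, (1 + (R N i ω)^q) ∂μ :=
            integral_mono (hmin2int i) (hOneR N i) h1
        _ ≤ v := hIR N i
    have hY2 : ∀ i, ∫ ω, (Y N i ω)^2 ∂μ ≤ v := fun i => by
      have hexp : (fun ω => (Y N i ω)^2)
          = fun ω => ((min (W N i ω) (c N))^2 - (2 * m N i) * min (W N i ω) (c N)) + (m N i)^2 :=
        funext fun ω => by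
          have hYe : Y N i ω = min (W N i ω) (c N) - m N i := rfl
          rw [hYe]; ring
      have hint1 : Integrable (fun ω => (min (W N i ω) (c N))^2
          - (2 * m N i) * min (W N i ω) (c N)) μ := (hmin2int i).sub ((hmintR i).const_mul _)
      rw [hexp, integral_add hint1 (integrable_const _),
        integral_sub (hmin2int i) ((hmintR i).const_mul _), integral_const_mul]
      simp only [integral_const, measure_univ, probReal_univ, smul_eq_mul, one_mul]
      have hmm : ∫ ω, min (W N i ω) (c N) ∂μ = m N i := rfl
      rw [hmm]
      nlinarith [hmin2v i, sq_nonneg (m N i)]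
    have hYind : iIndepFun (Y N) μ :=
      (hind N).comp (fun i => fun x : ℝ => min x (c N) - m N i)
        (fun i => (measurable_id.min measurable_const).sub measurable_const)
    have h24 := (moment24 (μ := μ) (Y := Y N) (b := c N + v) (v := v)
      (by positivity) hv0.le hYmeas hYb hY0 hY2 hYind Finset.univ).2
    rw [Finset.card_univ, Fintype.card_fin] at h24
    -- inclusion
    have hincl : D N ⊆ (⋃ i, {ω | c N < W N i ω})
        ∪ {ω | ((N:ℝ)*ε/2)^4 ≤ (∑ i, Y N i ω)^4} := by
      intro ω hω
      rw [Set.mem_union]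
      by_contra hcon
      push_neg at hcon
      obtain ⟨hA, hB⟩ := hcon
      have hWc : ∀ i, W N i ω ≤ c N := by
        intro i
        by_contra hlt
        push_neg at hlt
        exact hA (Set.mem_iUnion.mpr ⟨i, hlt⟩)
      have hY4lt : (∑ i, Y N i ω)^4 < ((N:ℝ)*ε/2)^4 := by
        simp only [Set.mem_setOf_eq] at hB
        exact not_le.mp hB
      have hSY : |∑ i, Y N i ω| ≤ (N:ℝ)*ε/2 := by
        by_contra hgt
        push_neg at hgt
        have h5 : ((N:ℝ)*ε/2)^4 ≤ |∑ i, Y N i ω|^4 :=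
          pow_le_pow_left₀ (by positivity) hgt.le 4
        rw [pow_abs, abs_of_nonneg (by positivity)] at h5
        exact absurd hY4lt (not_lt.mpr h5)
      have hid : ∑ i, (W N i ω - ∫ ω', W N i ω' ∂μ)
          = (∑ i, Y N i ω) + ∑ i, (m N i - ∫ ω', W N i ω' ∂μ) := by
        rw [← Finset.sum_add_distrib]
        refine Finset.sum_congr rfl fun i _ => ?_
        have hYe : Y N i ω = min (W N i ω) (c N) - m N i := rfl
        rw [hYe, min_eq_left (hWc i)]
        ring
      have hdev : ∀ i : Fin N, 0 ≤ (∫ ω', W N i ω' ∂μ) - m N i ∧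
          (∫ ω', W N i ω' ∂μ) - m N i ≤ C * (c N)^(1-q) := by
        intro i
        have hsub : (∫ ω', W N i ω' ∂μ) - m N i
            = ∫ ω', (W N i ω' - min (W N i ω') (c N)) ∂μ := by
          rw [integral_sub (hWint N i) (hmintR i)]
        constructor
        · rw [hsub]
          exact integral_nonneg fun ω' => sub_nonneg.mpr (min_le_left _ _)
        · rw [hsub]
          have hpt : ∀ ω', W N i ω' - min (W N i ω') (c N) ≤ (R N i ω')^q * (c N)^(1-q) := by
            intro ω'
            rcases le_or_gt (W N i ω') (c N) with h | h
            · rw [min_eq_left h, sub_self]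
              have hh1 := Real.rpow_nonneg (hRnn N i ω') q
              have hh2 := Real.rpow_nonneg hcpos.le (1-q)
              positivity
            · rw [min_eq_right h.le]
              have hWpos : 0 < W N i ω' := lt_trans hcpos h
              have h1 : (c N)^(q-1) ≤ (W N i ω')^(q-1) :=
                Real.rpow_le_rpow hcpos.le h.le (by linarith)
              have hcq1 : 0 < (c N)^(q-1) := Real.rpow_pos_of_pos hcpos _
              have e1 : (c N)^(1-q) = ((c N)^(q-1))⁻¹ := by
                rw [show (1-q : ℝ) = -(q-1) by ring, Real.rpow_neg hcpos.le]
              have hWq : (W N i ω')^q = W N i ω' * (W N i ω')^(q-1) := by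
                have hrw := Real.rpow_add hWpos 1 (q-1)
                rw [show (1:ℝ) + (q-1) = q by ring, Real.rpow_one] at hrw
                exact hrw
              have h4 : W N i ω' * (c N)^(q-1) ≤ (W N i ω')^q := by
                rw [hWq]; exact mul_le_mul_of_nonneg_left h1 hWpos.le
              have h3 : W N i ω' ≤ (W N i ω')^q * ((c N)^(q-1))⁻¹ := by
                have h3' : W N i ω' ≤ (W N i ω')^q / (c N)^(q-1) := (le_div_iff₀ hcq1).mpr h4
                rwa [div_eq_mul_inv] at h3'
              rw [e1]
              have h5 : (W N i ω')^q * ((c N)^(q-1))⁻¹ ≤ (R N i ω')^q * ((c N)^(q-1))⁻¹ :=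
                mul_le_mul_of_nonneg_right (hWq_le N i ω') (inv_nonneg.mpr hcq1.le)
              linarith
          have hint2 : Integrable (fun ω' => W N i ω' - min (W N i ω') (c N)) μ :=
            (hWint N i).sub (hmintR i)
          have hint3 : Integrable (fun ω' => (R N i ω')^q * (c N)^(1-q)) μ :=
            (hRint N i).mul_const _
          calc ∫ ω', (W N i ω' - min (W N i ω') (c N)) ∂μ
              ≤ ∫ ω', (R N i ω')^q * (c N)^(1-q) ∂μ := integral_mono hint2 hint3 hpt
            _ = (∫ ω', (R N i ω')^q ∂μ) * (c N)^(1-q) := integral_mul_const _ _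
            _ ≤ C * (c N)^(1-q) :=
                mul_le_mul_of_nonneg_right (hRq N i) (Real.rpow_nonneg hcpos.le _)
      have hsum_dev : |∑ i, (m N i - ∫ ω', W N i ω' ∂μ)| ≤ (N:ℝ) * (C * (c N)^(1-q)) := by
        calc |∑ i, (m N i - ∫ ω', W N i ω' ∂μ)| ≤ ∑ i, |m N i - ∫ ω', W N i ω' ∂μ| :=
            Finset.abs_sum_le_sum_abs _ _
          _ ≤ ∑ _i : Fin N, C * (c N)^(1-q) := Finset.sum_le_sum (fun i _ => by
              have h := hdev i
              rw [abs_sub_comm, abs_of_nonneg h.1]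
              exact h.2)
          _ = (N:ℝ) * (C * (c N)^(1-q)) := by
              rw [Finset.sum_const, Finset.card_univ, Fintype.card_fin, nsmul_eq_mul]
      have hccompute : C * (c N)^(1-q) = C * (N:ℝ)^(α*(1-q)) := by
        have hce : c N = (N:ℝ)^α := rfl
        rw [hce, ← Real.rpow_mul (Nat.cast_nonneg N)]
      have hfinal : |∑ i, (W N i ω - ∫ ω', W N i ω' ∂μ)| ≤ (N:ℝ)*ε := by
        rw [hid]
        have hstep : (N:ℝ) * (C * (c N)^(1-q)) ≤ (N:ℝ) * (ε/2) := by
          apply mul_le_mul_of_nonneg_left _ hNpos.le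
          rw [hccompute]; exact hsmall
        calc |(∑ i, Y N i ω) + ∑ i, (m N i - ∫ ω', W N i ω' ∂μ)|
            ≤ |∑ i, Y N i ω| + |∑ i, (m N i - ∫ ω', W N i ω' ∂μ)| := abs_add_le _ _
          _ ≤ (N:ℝ)*ε/2 + (N:ℝ)*(C * (c N)^(1-q)) := add_le_add hSY hsum_dev
          _ ≤ (N:ℝ)*ε/2 + (N:ℝ)*(ε/2) := by linarith [hstep]
          _ = (N:ℝ)*ε := by ring
      have : ω ∉ D N := by
        intro hmem
        have hmem' : (N:ℝ)*ε < |∑ i, (W N i ω - ∫ ω', W N i ω' ∂μ)| := hmem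
        exact absurd hmem' (not_lt.mpr hfinal)
      exact this hω
    -- measure bounds
    have hMA : μ (⋃ i, {ω | c N < W N i ω}) ≤ ENNReal.ofReal ((N:ℝ) * (C / (c N)^q)) := by
      have hcqpos : 0 < (c N)^q := Real.rpow_pos_of_pos hcpos q
      have hone : ∀ i : Fin N, μ {ω | c N < W N i ω} ≤ ENNReal.ofReal (C / (c N)^q) := by
        intro i
        have hsub : {ω | c N < W N i ω} ⊆ {ω | (c N)^q ≤ (R N i ω)^q} := by
          intro ω hω
          have h1 : (c N)^q ≤ (W N i ω)^q :=
            Real.rpow_le_rpow hcpos.le (le_of_lt hω) hq0.le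
          exact le_trans h1 (hWq_le N i ω)
        have h2 := markov_ofReal (μ := μ) (hRint N i)
          (fun ω => Real.rpow_nonneg (hRnn N i ω) q) hcqpos
        refine le_trans (measure_mono hsub) (le_trans h2 (ENNReal.ofReal_le_ofReal ?_))
        exact (div_le_div_iff_of_pos_right hcqpos).mpr (hRq N i)
      calc μ (⋃ i, {ω | c N < W N i ω}) ≤ ∑' (i : Fin N), μ {ω | c N < W N i ω} :=
            measure_iUnion_le _
        _ ≤ ∑' (i : Fin N), ENNReal.ofReal (C / (c N)^q) := ENNReal.tsum_le_tsum hone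
        _ = (N : ENNReal) * ENNReal.ofReal (C / (c N)^q) := by
            rw [tsum_fintype]
            simp [Finset.sum_const, Finset.card_univ, mul_comm]
        _ = ENNReal.ofReal ((N:ℝ) * (C / (c N)^q)) := by
            rw [ENNReal.ofReal_mul (Nat.cast_nonneg N), ENNReal.ofReal_natCast]
    have hMB : μ {ω | ((N:ℝ)*ε/2)^4 ≤ (∑ i, Y N i ω)^4}
        ≤ ENNReal.ofReal ((3*((N:ℝ)*v)^2 + (N:ℝ)*(c N + v)^2*v) / ((N:ℝ)*ε/2)^4) := by
      have hSmeas : Measurable (fun ω => ∑ i, Y N i ω) :=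
        Finset.measurable_sum _ fun i _ => hYmeas i
      have hSint : Integrable (fun ω => (∑ i, Y N i ω)^4) μ := by
        refine integrable_of_abs_le (hSmeas.pow_const 4)
          (C := ((N:ℝ)*(c N + v))^4) fun ω => ?_
        rw [abs_pow]
        refine pow_le_pow_left₀ (abs_nonneg _) ?_ 4
        calc |∑ i, Y N i ω| ≤ ∑ i, |Y N i ω| := Finset.abs_sum_le_sum_abs _ _
          _ ≤ ∑ _i : Fin N, (c N + v) := Finset.sum_le_sum fun i _ => hYb i ω
          _ = (N:ℝ)*(c N + v) := by
              rw [Finset.sum_const, Finset.card_univ, Fintype.card_fin, nsmul_eq_mul]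
      have h4pos : 0 < ((N:ℝ)*ε/2)^4 := by positivity
      refine le_trans (markov_ofReal hSint (fun ω => by positivity) h4pos)
        (ENNReal.ofReal_le_ofReal ?_)
      exact (div_le_div_iff_of_pos_right h4pos).mpr h24
    -- combine
    refine le_trans (measure_mono hincl) (le_trans (measure_union_le _ _) ?_)
    refine le_trans (add_le_add hMA hMB) ?_
    rw [← ENNReal.ofReal_add (by positivity) (by positivity)]
    refine ENNReal.ofReal_le_ofReal ?_
    -- real inequality
    have hcq : (c N)^q = (N:ℝ)^(α*q) := by
      have hce : c N = (N:ℝ)^α := rfl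
      rw [hce, ← Real.rpow_mul (Nat.cast_nonneg N)]
    have e1 : (N:ℝ) * (C / (c N)^q) = C * (N:ℝ)^(1-α*q) := by
      rw [hcq, Real.rpow_sub hNpos, Real.rpow_one]
      have hne : (N:ℝ)^(α*q) ≠ 0 := ne_of_gt (Real.rpow_pos_of_pos hNpos _)
      field_simp
    have hn2 : (N:ℝ)^(-2:ℝ) = ((N:ℝ)^(2:ℕ))⁻¹ := by
      rw [show (-2:ℝ) = -((2:ℕ):ℝ) by norm_num, Real.rpow_neg (Nat.cast_nonneg N),
        Real.rpow_natCast]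
    have hn3 : (N:ℝ)^(-3:ℝ) = ((N:ℝ)^(3:ℕ))⁻¹ := by
      rw [show (-3:ℝ) = -((3:ℕ):ℝ) by norm_num, Real.rpow_neg (Nat.cast_nonneg N),
        Real.rpow_natCast]
    have hn23 : (N:ℝ)^(2*α-3) = ((N:ℝ)^α)^(2:ℕ) * ((N:ℝ)^(3:ℕ))⁻¹ := by
      rw [show (2*α-3 : ℝ) = α*((2:ℕ):ℝ) + (-((3:ℕ):ℝ)) by push_cast; ring,
        Real.rpow_add hNpos, Real.rpow_mul (Nat.cast_nonneg N), Real.rpow_natCast,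
        Real.rpow_neg (Nat.cast_nonneg N), Real.rpow_natCast]
    have e2 : (3*((N:ℝ)*v)^2 + (N:ℝ)*(c N + v)^2*v) / ((N:ℝ)*ε/2)^4
        ≤ (16/ε^4) * (3*v^2*(N:ℝ)^(-2:ℝ) + 2*v*(N:ℝ)^(2*α-3) + 2*v^3*(N:ℝ)^(-3:ℝ)) := by
      have hce : c N = (N:ℝ)^α := rfl
      rw [hn2, hn3, hn23, hce]
      have hP : 0 < (N:ℝ)^α := Real.rpow_pos_of_pos hNpos α
      have hkey : ((N:ℝ)^α + v)^2 ≤ 2*((N:ℝ)^α)^2 + 2*v^2 := by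
        nlinarith [sq_nonneg ((N:ℝ)^α - v)]
      have hNne : (N:ℝ) ≠ 0 := ne_of_gt hNpos
      have hεne : ε ≠ 0 := ne_of_gt hε
      have hLHS : (3*((N:ℝ)*v)^2 + (N:ℝ)*((N:ℝ)^α + v)^2*v) / ((N:ℝ)*ε/2)^4
          = 16*(3*(N:ℝ)*v^2 + ((N:ℝ)^α + v)^2*v) / ((N:ℝ)^3*ε^4) := by
        rw [div_eq_div_iff (by positivity) (by positivity)]
        ring
      have hRHS : (16/ε^4) * (3*v^2*((N:ℝ)^(2:ℕ))⁻¹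
            + 2*v*(((N:ℝ)^α)^(2:ℕ) * ((N:ℝ)^(3:ℕ))⁻¹) + 2*v^3*((N:ℝ)^(3:ℕ))⁻¹)
          = 16*(3*(N:ℝ)*v^2 + 2*v*((N:ℝ)^α)^2 + 2*v^3) / ((N:ℝ)^3*ε^4) := by
        rw [eq_div_iff (by positivity)]
        field_simp
      rw [hLHS, hRHS]
      apply (div_le_div_iff_of_pos_right (by positivity)).mpr
      nlinarith [mul_le_mul_of_nonneg_right hkey hv0.le]
    calc (N:ℝ) * (C / (c N)^q) + (3*((N:ℝ)*v)^2 + (N:ℝ)*(c N + v)^2*v) / ((N:ℝ)*ε/2)^4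
        = C * (N:ℝ)^(1-α*q)
          + (3*((N:ℝ)*v)^2 + (N:ℝ)*(c N + v)^2*v) / ((N:ℝ)*ε/2)^4 := by rw [e1]
      _ ≤ C * (N:ℝ)^(1-α*q) + (16/ε^4) * (3*v^2*(N:ℝ)^(-2:ℝ)
            + 2*v*(N:ℝ)^(2*α-3) + 2*v^3*(N:ℝ)^(-3:ℝ)) := by linarith [e2]
      _ = u N := rfl
  -- summability
  have husum : Summable u := by
    have h1 : Summable (fun N : ℕ => (N:ℝ)^(1-α*q)) := Real.summable_nat_rpow.mpr (by linarith)
    have h2 : Summable (fun N : ℕ => (N:ℝ)^(-2:ℝ)) := Real.summable_nat_rpow.mpr (by norm_num)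
    have h3 : Summable (fun N : ℕ => (N:ℝ)^(2*α-3)) := Real.summable_nat_rpow.mpr (by linarith)
    have h4 : Summable (fun N : ℕ => (N:ℝ)^(-3:ℝ)) := Real.summable_nat_rpow.mpr (by norm_num)
    exact (h1.mul_left C).add
      ((((h2.mul_left (3*v^2)).add (h3.mul_left (2*v))).add
        (h4.mul_left (2*v^3))).mul_left (16/ε^4))
  have hsums : ∑' N, μ (s N) ≠ ⊤ := by
    have hle : ∀ N, μ (s N) ≤ ENNReal.ofReal (u N) := by
      intro N
      by_cases h : N₁ ≤ N
      · have hseq : s N = D N := by simp only [hsdef, if_pos h]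
        rw [hseq]; exact hμD N h
      · have hseq : s N = ∅ := by simp only [hsdef, if_neg h]
        rw [hseq]
        simp [hunn N]
    have hb : (∑' N, ENNReal.ofReal (u N)) ≠ ⊤ := by
      rw [← ENNReal.ofReal_tsum_of_nonneg hunn husum]
      exact ENNReal.ofReal_ne_top
    exact ne_top_of_le_ne_top hb (ENNReal.tsum_le_tsum hle)
  filter_upwards [MeasureTheory.ae_eventually_notMem hsums] with ω hω
  filter_upwards [hω, eventually_ge_atTop N₁] with N h1 h2
  have h3 : ω ∉ D N := by
    intro hmem
    apply h1
    simp only [hsdef, if_pos h2]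
    exact hmem
  have h4 : ¬ ((N:ℝ)*ε < |∑ i, (W N i ω - ∫ ω', W N i ω' ∂μ)|) := h3
  exact not_lt.mp h4

end Key
section Chaining

open Set

lemma chaining (T : ℝ) (hT : 0 < T) (K : ℕ) (hK : 1 ≤ K) (φ ψ : ℝ → ℝ)
    (hφ : MonotoneOn φ (Set.Icc 0 T)) (hψ : MonotoneOn ψ (Set.Icc 0 T))
    (c₀ e : ℝ)
    (hhold : ∀ k : ℕ, k < K → ψ (((k:ℝ)+1)*T/K) - ψ ((k:ℝ)*T/K) ≤ c₀)
    (hgrid : ∀ k : ℕ, k ≤ K → |φ ((k:ℝ)*T/K) - ψ ((k:ℝ)*T/K)| ≤ e)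
    {t : ℝ} (ht : t ∈ Set.Icc 0 T) : |φ t - ψ t| ≤ e + c₀ := by
  obtain ⟨ht0, htT⟩ := ht
  have hKR : (0:ℝ) < K := by exact_mod_cast hK
  set k : ℕ := min ⌊t*K/T⌋₊ (K-1) with hkdef
  have hkK : k < K := by
    have h1 : k ≤ K - 1 := min_le_right _ _
    omega
  have hk1K : k + 1 ≤ K := hkK
  have hu : ∀ j : ℕ, j ≤ K → (j:ℝ)*T/K ∈ Set.Icc (0:ℝ) T := by
    intro j hj
    have hjR : (j:ℝ) ≤ K := by exact_mod_cast hj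
    constructor
    · positivity
    · rw [div_le_iff₀ hKR]
      nlinarith
  have hlow : (k:ℝ)*T/K ≤ t := by
    have h1 : (k:ℝ) ≤ t*K/T := by
      have h2 : (k:ℝ) ≤ (⌊t*K/T⌋₊ : ℝ) := by exact_mod_cast min_le_left _ _
      exact h2.trans (Nat.floor_le (by positivity))
    rw [div_le_iff₀ hKR]
    calc (k:ℝ)*T ≤ (t*K/T)*T := by nlinarith
      _ = t*K := by field_simp
  have hhigh : t ≤ ((k:ℝ)+1)*T/K := by
    rcases lt_or_ge (⌊t*K/T⌋₊) K with hcase | hcase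
    · have hkfl : k = ⌊t*K/T⌋₊ := by omega
      have h1 : t*K/T < (k:ℝ) + 1 := by
        rw [hkfl]
        push_cast
        exact Nat.lt_floor_add_one _
      rw [le_div_iff₀ hKR]
      calc t*K = (t*K/T)*T := by field_simp
        _ ≤ ((k:ℝ)+1)*T := by nlinarith
    · have hkfl : k + 1 = K := by omega
      have hKeq : ((k:ℝ)+1) = (K:ℝ) := by exact_mod_cast congrArg (Nat.cast : ℕ → ℝ) hkfl
      rw [hKeq, le_div_iff₀ hKR]
      nlinarith
  have hmem_k := hu k (le_of_lt hkK)
  have hmem_k1' := hu (k+1) hk1K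
  have hmem_k1 : ((k:ℝ)+1)*T/K ∈ Set.Icc (0:ℝ) T := by
    have : ((k+1:ℕ):ℝ) = (k:ℝ)+1 := by push_cast; ring
    rwa [this] at hmem_k1'
  have htmem : t ∈ Set.Icc (0:ℝ) T := ⟨ht0, htT⟩
  have hg1 : φ t ≤ φ (((k:ℝ)+1)*T/K) := hφ htmem hmem_k1 hhigh
  have hg2 : φ ((k:ℝ)*T/K) ≤ φ t := hφ hmem_k htmem hlow
  have hh1 : ψ t ≤ ψ (((k:ℝ)+1)*T/K) := hψ htmem hmem_k1 hhigh
  have hh2 : ψ ((k:ℝ)*T/K) ≤ ψ t := hψ hmem_k htmem hlow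
  have hc := hhold k hkK
  have he1 := hgrid k (le_of_lt hkK)
  have he2' := hgrid (k+1) hk1K
  have he2 : |φ (((k:ℝ)+1)*T/K) - ψ (((k:ℝ)+1)*T/K)| ≤ e := by
    have : ((k+1:ℕ):ℝ) = (k:ℝ)+1 := by push_cast; ring
    rwa [this] at he2'
  rw [abs_le] at he1 he2 ⊢
  constructor <;> [nlinarith [he1.1, he2.1]; nlinarith [he1.2, he2.2]]

end Chaining
open MeasureTheory ProbabilityTheory Filter

def Tri (T : ℝ) : Set (ℝ × ℝ) := {p | 0 ≤ p.1 ∧ p.1 ≤ p.2 ∧ p.2 ≤ T}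

/-- Membership in `D↑`: non-decreasing and right-continuous on `[0,T]`. -/
def MemDUp (T : ℝ) (z : ℝ → ℝ) : Prop :=
  MonotoneOn z (Set.Icc 0 T) ∧
  ∀ t ∈ Set.Ico (0 : ℝ) T, ContinuousWithinAt z (Set.Icc t T) t

set_option maxHeartbeats 4000000 in
/-- Corollary 1.2, complete law of large numbers part. -/
theorem one_parameter_complete_LLN
    {Ω : Type*} [MeasurableSpace Ω] (μ : Measure Ω) [IsProbabilityMeasure μ]
    (T q r : ℝ) (hT : 0 < T) (hq : 2 < q) (hr : 0 < r)
    (Z : (N : ℕ) → Fin N → Ω → ℝ → ℝ) (M : ℕ → ℝ) (w : (N : ℕ) → Fin N → ℝ)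
    (hM : ∀ N, 0 < M N) (hw : ∀ N i, 0 ≤ w N i)
    (hD : ∀ N i ω, MemDUp T (Z N i ω))
    (hmeas : ∀ N i t, Measurable (fun ω => Z N i ω t))
    (hindep : ∀ N, iIndepFun (Z N) μ)
    (hintq : ∀ N i, Integrable (fun ω => |Z N i ω T - Z N i ω 0| ^ q) μ)
    (hintpt : ∀ N i t, Integrable (fun ω => Z N i ω t) μ)
    (hmom : ∀ N i, (∫ ω, |Z N i ω T - Z N i ω 0| ^ q ∂μ) ^ (1/q) ≤ M N)
    (hHolder : ∀ N i, ∀ s t, s ∈ Set.Icc (0 : ℝ) T → t ∈ Set.Icc (0 : ℝ) T →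
      |(∫ ω, Z N i ω t ∂μ) - ∫ ω, Z N i ω s ∂μ| ≤ M N * w N i * |t - s| ^ r)
    (hbdd : ∃ B : ℝ, ∀ N : ℕ, 0 < N → M N + (1 / N : ℝ) * ∑ i, w N i ≤ B)
    (hexp : (q ^ 2 - 2 * q - 2) * r > 2) :
    ∀ᵐ ω ∂μ, Tendsto (fun N : ℕ =>
        ⨆ p : Tri T, |(1 / N : ℝ) * ∑ i,
          ((Z N i ω (p : ℝ × ℝ).2 - Z N i ω (p : ℝ × ℝ).1) -
           ∫ ω', (Z N i ω' (p : ℝ × ℝ).2 - Z N i ω' (p : ℝ × ℝ).1) ∂μ)|)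
      atTop (nhds 0) := by
  classical
  have hq0 : (0:ℝ) < q := by linarith
  obtain ⟨B₀, hB₀⟩ := hbdd
  set B : ℝ := max B₀ 1 with hBdef
  have hB1 : (1:ℝ) ≤ B := le_max_right _ _
  have hB0 : (0:ℝ) < B := by linarith
  have hMB' : ∀ N : ℕ, 0 < N → M N + (1/N:ℝ) * ∑ i, w N i ≤ B :=
    fun N hN => (hB₀ N hN).trans (le_max_left _ _)
  have hwsum : ∀ N : ℕ, (0:ℝ) ≤ (1/N:ℝ) * ∑ i, w N i := fun N => by
    have h1 : (0:ℝ) ≤ ∑ i, w N i := Finset.sum_nonneg fun i _ => hw N i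
    positivity
  have hMle : ∀ N : ℕ, 0 < N → M N ≤ B := fun N hN => by
    have := hMB' N hN; have := hwsum N; linarith
  have hMb : ∀ N : ℕ, 0 < N → M N * ((1/N:ℝ) * ∑ i, w N i) ≤ B^2/4 := by
    intro N hN
    have h1 := hMB' N hN
    have h2 := (hM N).le
    have h3 := hwsum N
    nlinarith [sq_nonneg (M N - (1/N:ℝ) * ∑ i, w N i)]
  -- q-th moment bound
  have hRq : ∀ (N : ℕ) (i : Fin N), ∫ ω, |Z N i ω T - Z N i ω 0| ^ q ∂μ ≤ B ^ q := by
    intro N i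
    have hN : 0 < N := i.pos
    have h0 : 0 ≤ ∫ ω, |Z N i ω T - Z N i ω 0| ^ q ∂μ :=
      integral_nonneg fun ω => Real.rpow_nonneg (abs_nonneg _) q
    have h1 : (∫ ω, |Z N i ω T - Z N i ω 0| ^ q ∂μ) ^ (1/q) ≤ B :=
      (hmom N i).trans (hMle N hN)
    have key : ((∫ ω, |Z N i ω T - Z N i ω 0| ^ q ∂μ) ^ (1/q)) ^ q
        = ∫ ω, |Z N i ω T - Z N i ω 0| ^ q ∂μ := by
      rw [← Real.rpow_mul h0, one_div, inv_mul_cancel₀ (ne_of_gt hq0), Real.rpow_one]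
    rw [← key]
    exact Real.rpow_le_rpow (Real.rpow_nonneg h0 _) h1 hq0.le
  have hBq1 : (1:ℝ) ≤ B ^ q := Real.one_le_rpow hB1 hq0.le
  have h0mem : (0:ℝ) ∈ Set.Icc (0:ℝ) T := ⟨le_refl 0, hT.le⟩
  have hTmem : (T:ℝ) ∈ Set.Icc (0:ℝ) T := ⟨hT.le, le_refl T⟩
  -- main per-ε statement
  have main : ∀ ε : ℝ, 0 < ε → ∀ᵐ ω ∂μ, ∀ᶠ N : ℕ in atTop,
      (⨆ p : Tri T, |(1 / N : ℝ) * ∑ i,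
          ((Z N i ω (p : ℝ × ℝ).2 - Z N i ω (p : ℝ × ℝ).1) -
           ∫ ω', (Z N i ω' (p : ℝ × ℝ).2 - Z N i ω' (p : ℝ × ℝ).1) ∂μ)|) ≤ ε := by
    intro ε hε
    -- choose grid size K
    obtain ⟨K, hK1, hKb⟩ : ∃ K : ℕ, 1 ≤ K ∧ (T/K) ^ r ≤ ε/(2*B^2) := by
      set η : ℝ := ε/(2*B^2) with hηdef
      have hη : 0 < η := by positivity
      set δ : ℝ := η ^ (1/r) with hδdef
      have hδ : 0 < δ := Real.rpow_pos_of_pos hη _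
      refine ⟨max 1 ⌈T/δ⌉₊, le_max_left _ _, ?_⟩
      set K := max 1 ⌈T/δ⌉₊ with hKdef
      have hKpos : (0:ℝ) < K := by
        have h1 : 1 ≤ K := le_max_left _ _
        exact_mod_cast h1
      have hTK : T/K ≤ δ := by
        have h1 : T/δ ≤ (K:ℝ) := by
          have h2 : (⌈T/δ⌉₊ : ℝ) ≤ K := by exact_mod_cast le_max_right 1 ⌈T/δ⌉₊
          exact (Nat.le_ceil _).trans h2
        rw [div_le_iff₀ hKpos]
        calc T = (T/δ)*δ := by field_simp
          _ ≤ (K:ℝ)*δ := mul_le_mul_of_nonneg_right h1 hδ.le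
          _ = δ*K := by ring
      have hδr : δ ^ r = η := by
        rw [hδdef, ← Real.rpow_mul hη.le, one_div, inv_mul_cancel₀ (ne_of_gt hr),
          Real.rpow_one]
      calc (T/K) ^ r ≤ δ ^ r := Real.rpow_le_rpow (by positivity) hTK hr.le
        _ = η := hδr
    have hKR : (0:ℝ) < K := by exact_mod_cast hK1
    -- grid points
    have humem : ∀ k : ℕ, k ≤ K → (k:ℝ)*T/K ∈ Set.Icc (0:ℝ) T := by
      intro k hk
      have hkR : (k:ℝ) ≤ K := by exact_mod_cast hk
      constructor
      · positivity
      · rw [div_le_iff₀ hKR]; nlinarith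
    -- complete convergence at each grid point
    have hkey : ∀ k : ℕ, k ≤ K → ∀ᵐ ω ∂μ, ∀ᶠ N : ℕ in atTop,
        |∑ i, ((Z N i ω ((k:ℝ)*T/K) - Z N i ω 0)
          - ∫ ω', (Z N i ω' ((k:ℝ)*T/K) - Z N i ω' 0) ∂μ)| ≤ (N:ℝ) * (ε/8) := by
      intro k hk
      have hmem := humem k hk
      exact key_eventually μ q (B^q) hq hBq1
        (fun N i ω => Z N i ω ((k:ℝ)*T/K) - Z N i ω 0)
        (fun N i ω => |Z N i ω T - Z N i ω 0|)
        (fun N i => (hmeas N i _).sub (hmeas N i 0))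
        (fun N i ω => by
          have := (hD N i ω).1 h0mem hmem hmem.1
          simp only [sub_nonneg]
          exact this)
        (fun N i ω => by
          have h1 : Z N i ω ((k:ℝ)*T/K) ≤ Z N i ω T := (hD N i ω).1 hmem hTmem hmem.2
          have h2 : Z N i ω T - Z N i ω 0 ≤ |Z N i ω T - Z N i ω 0| := le_abs_self _
          linarith)
        (fun N i => hintq N i)
        (fun N i => hRq N i)
        (fun N => (hindep N).comp
          (fun _ => fun f : ℝ → ℝ => f ((k:ℝ)*T/K) - f 0)
          (fun _ => (measurable_pi_apply _).sub (measurable_pi_apply _)))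
        (ε/8) (by positivity)
    have hall : ∀ᵐ ω ∂μ, ∀ k : Fin (K+1), ∀ᶠ N : ℕ in atTop,
        |∑ i, ((Z N i ω (((k:ℕ):ℝ)*T/K) - Z N i ω 0)
          - ∫ ω', (Z N i ω' (((k:ℕ):ℝ)*T/K) - Z N i ω' 0) ∂μ)| ≤ (N:ℝ) * (ε/8) :=
      ae_all_iff.mpr fun k => hkey k.val (Nat.lt_succ_iff.mp k.isLt)
    filter_upwards [hall] with ω hω
    have hev : ∀ᶠ N : ℕ in atTop, (∀ k : Fin (K+1),
        |∑ i, ((Z N i ω (((k:ℕ):ℝ)*T/K) - Z N i ω 0)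
          - ∫ ω', (Z N i ω' (((k:ℕ):ℝ)*T/K) - Z N i ω' 0) ∂μ)| ≤ (N:ℝ) * (ε/8)) ∧ 1 ≤ N :=
      (eventually_all.mpr hω).and (eventually_ge_atTop 1)
    filter_upwards [hev] with N hN
    obtain ⟨hgridN, hN1⟩ := hN
    have hNR : (1:ℝ) ≤ (N:ℝ) := by exact_mod_cast hN1
    have hNpos : (0:ℝ) < N := by linarith
    have hN0 : 0 < N := hN1
    -- deterministic chaining
    set gfun : ℝ → ℝ := fun t => (1/N:ℝ) * ∑ i, (Z N i ω t - Z N i ω 0) with hgdef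
    set hfun : ℝ → ℝ := fun t => (1/N:ℝ) * ∑ i,
      ((∫ ω', Z N i ω' t ∂μ) - ∫ ω', Z N i ω' 0 ∂μ) with hhdef
    have hgmono : MonotoneOn gfun (Set.Icc 0 T) := by
      intro x hx y hy hxy
      have h2 : ∑ i, (Z N i ω x - Z N i ω 0) ≤ ∑ i, (Z N i ω y - Z N i ω 0) :=
        Finset.sum_le_sum fun i _ => by
          have := (hD N i ω).1 hx hy hxy
          linarith
      have h3 : (0:ℝ) ≤ 1/N := by positivity
      exact mul_le_mul_of_nonneg_left h2 h3
    have hhmono : MonotoneOn hfun (Set.Icc 0 T) := by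
      intro x hx y hy hxy
      have h2 : ∑ i, ((∫ ω', Z N i ω' x ∂μ) - ∫ ω', Z N i ω' 0 ∂μ)
          ≤ ∑ i, ((∫ ω', Z N i ω' y ∂μ) - ∫ ω', Z N i ω' 0 ∂μ) :=
        Finset.sum_le_sum fun i _ => by
          have h4 : (∫ ω', Z N i ω' x ∂μ) ≤ ∫ ω', Z N i ω' y ∂μ :=
            integral_mono (hintpt N i x) (hintpt N i y) (fun ω' => (hD N i ω').1 hx hy hxy)
          linarith
      have h3 : (0:ℝ) ≤ 1/N := by positivity
      exact mul_le_mul_of_nonneg_left h2 h3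
    have hhold : ∀ k : ℕ, k < K → hfun (((k:ℝ)+1)*T/K) - hfun ((k:ℝ)*T/K) ≤ ε/8 := by
      intro k hkK
      have ht1 := humem k (le_of_lt hkK)
      have ht2' := humem (k+1) hkK
      have hcast : ((k+1:ℕ):ℝ) = (k:ℝ)+1 := by push_cast; ring
      have ht2 : ((k:ℝ)+1)*T/K ∈ Set.Icc (0:ℝ) T := by rw [← hcast]; exact ht2'
      have hdiff : hfun (((k:ℝ)+1)*T/K) - hfun ((k:ℝ)*T/K)
          = (1/N:ℝ) * ∑ i, ((∫ ω', Z N i ω' (((k:ℝ)+1)*T/K) ∂μ)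
            - ∫ ω', Z N i ω' ((k:ℝ)*T/K) ∂μ) := by
        simp only [hhdef]
        rw [← mul_sub, ← Finset.sum_sub_distrib]
        congr 1
        refine Finset.sum_congr rfl fun i _ => ?_
        ring
      rw [hdiff]
      have habs : |(((k:ℝ)+1)*T/K) - ((k:ℝ)*T/K)| = T/K := by
        rw [show (((k:ℝ)+1)*T/K) - ((k:ℝ)*T/K) = T/K by field_simp; ring]
        exact abs_of_nonneg (by positivity)
      have hsum : ∑ i, ((∫ ω', Z N i ω' (((k:ℝ)+1)*T/K) ∂μ)
          - ∫ ω', Z N i ω' ((k:ℝ)*T/K) ∂μ) ≤ (M N * (T/K)^r) * ∑ i, w N i := by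
        calc ∑ i, ((∫ ω', Z N i ω' (((k:ℝ)+1)*T/K) ∂μ) - ∫ ω', Z N i ω' ((k:ℝ)*T/K) ∂μ)
            ≤ ∑ i, M N * w N i * (T/K)^r := Finset.sum_le_sum (fun i _ => by
              have h1 := hHolder N i ((k:ℝ)*T/K) (((k:ℝ)+1)*T/K) ht1 ht2
              rw [habs] at h1
              exact (le_abs_self _).trans h1)
          _ = ∑ i, (M N * (T/K)^r) * w N i := Finset.sum_congr rfl fun i _ => by ring
          _ = (M N * (T/K)^r) * ∑ i, w N i := (Finset.mul_sum _ _ _).symm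
      have hfin : (1/N:ℝ) * ((M N * (T/K)^r) * ∑ i, w N i) ≤ ε/8 := by
        have h1 : (1/N:ℝ) * ((M N * (T/K)^r) * ∑ i, w N i)
            = (M N * ((1/N:ℝ) * ∑ i, w N i)) * (T/K)^r := by ring
        rw [h1]
        have h2 := hMb N hN0
        have h3 : (0:ℝ) ≤ (T/K)^r := Real.rpow_nonneg (by positivity) r
        have h4 : (M N * ((1/N:ℝ) * ∑ i, w N i)) * (T/K)^r ≤ (B^2/4) * (T/K)^r :=
          mul_le_mul_of_nonneg_right h2 h3
        have h5 : (B^2/4) * (T/K)^r ≤ (B^2/4) * (ε/(2*B^2)) :=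
          mul_le_mul_of_nonneg_left hKb (by positivity)
        have h6 : (B^2/4) * (ε/(2*B^2)) = ε/8 := by field_simp; ring
        linarith
      calc (1/N:ℝ) * ∑ i, ((∫ ω', Z N i ω' (((k:ℝ)+1)*T/K) ∂μ)
            - ∫ ω', Z N i ω' ((k:ℝ)*T/K) ∂μ)
          ≤ (1/N:ℝ) * ((M N * (T/K)^r) * ∑ i, w N i) :=
            mul_le_mul_of_nonneg_left hsum (by positivity)
        _ ≤ ε/8 := hfin
    have hgrid : ∀ k : ℕ, k ≤ K → |gfun ((k:ℝ)*T/K) - hfun ((k:ℝ)*T/K)| ≤ ε/8 := by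
      intro k hk
      have hk' : k < K+1 := by omega
      have h1 := hgridN ⟨k, hk'⟩
      have hrw : gfun ((k:ℝ)*T/K) - hfun ((k:ℝ)*T/K)
          = (1/N:ℝ) * ∑ i, ((Z N i ω ((k:ℝ)*T/K) - Z N i ω 0)
            - ∫ ω', (Z N i ω' ((k:ℝ)*T/K) - Z N i ω' 0) ∂μ) := by
        simp only [hgdef, hhdef]
        rw [← mul_sub, ← Finset.sum_sub_distrib]
        congr 1
        refine Finset.sum_congr rfl fun i _ => ?_
        rw [integral_sub (hintpt N i _) (hintpt N i 0)]
      rw [hrw, abs_mul, abs_of_nonneg (show (0:ℝ) ≤ 1/N by positivity)]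
      have h2 : |∑ i, ((Z N i ω ((k:ℝ)*T/K) - Z N i ω 0)
          - ∫ ω', (Z N i ω' ((k:ℝ)*T/K) - Z N i ω' 0) ∂μ)| ≤ (N:ℝ) * (ε/8) := h1
      calc (1/N:ℝ) * |∑ i, ((Z N i ω ((k:ℝ)*T/K) - Z N i ω 0)
            - ∫ ω', (Z N i ω' ((k:ℝ)*T/K) - Z N i ω' 0) ∂μ)|
          ≤ (1/N:ℝ) * ((N:ℝ) * (ε/8)) := mul_le_mul_of_nonneg_left h2 (by positivity)
        _ = ε/8 := by field_simp
    -- conclude via chaining + sup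
    haveI : Nonempty (Tri T) := ⟨⟨(0,0), ⟨le_refl 0, le_refl 0, hT.le⟩⟩⟩
    refine ciSup_le fun p => ?_
    obtain ⟨⟨t₁, t₂⟩, hp⟩ := p
    obtain ⟨hp1, hp2, hp3⟩ := hp
    have ht₁ : t₁ ∈ Set.Icc (0:ℝ) T := ⟨hp1, hp2.trans hp3⟩
    have ht₂ : t₂ ∈ Set.Icc (0:ℝ) T := ⟨hp1.trans hp2, hp3⟩
    have hc1 := chaining T hT K hK1 gfun hfun hgmono hhmono (ε/8) (ε/8) hhold hgrid ht₁
    have hc2 := chaining T hT K hK1 gfun hfun hgmono hhmono (ε/8) (ε/8) hhold hgrid ht₂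
    show |(1 / N : ℝ) * ∑ i, ((Z N i ω t₂ - Z N i ω t₁)
        - ∫ ω', (Z N i ω' t₂ - Z N i ω' t₁) ∂μ)| ≤ ε
    have hexpr : (1 / N : ℝ) * ∑ i, ((Z N i ω t₂ - Z N i ω t₁)
          - ∫ ω', (Z N i ω' t₂ - Z N i ω' t₁) ∂μ)
        = (gfun t₂ - hfun t₂) - (gfun t₁ - hfun t₁) := by
      have e1 : ∀ i : Fin N, (Z N i ω t₂ - Z N i ω t₁)
            - (∫ ω', (Z N i ω' t₂ - Z N i ω' t₁) ∂μ)
          = ((Z N i ω t₂ - Z N i ω 0) - ((∫ ω', Z N i ω' t₂ ∂μ) - ∫ ω', Z N i ω' 0 ∂μ))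
            - ((Z N i ω t₁ - Z N i ω 0)
              - ((∫ ω', Z N i ω' t₁ ∂μ) - ∫ ω', Z N i ω' 0 ∂μ)) := fun i => by
        rw [integral_sub (hintpt N i t₂) (hintpt N i t₁)]
        ring
      rw [Finset.sum_congr rfl (fun i _ => e1 i)]
      simp only [hgdef, hhdef]
      simp only [Finset.sum_sub_distrib]
      ring
    rw [hexpr]
    have ha := abs_le.mp hc1
    have hb := abs_le.mp hc2
    rw [abs_le]
    constructor
    · linarith [ha.1, ha.2, hb.1, hb.2]
    · linarith [ha.1, ha.2, hb.1, hb.2]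
  -- assemble the limit
  have hcomb : ∀ᵐ ω ∂μ, ∀ m : ℕ, ∀ᶠ N : ℕ in atTop,
      (⨆ p : Tri T, |(1 / N : ℝ) * ∑ i,
          ((Z N i ω (p : ℝ × ℝ).2 - Z N i ω (p : ℝ × ℝ).1) -
           ∫ ω', (Z N i ω' (p : ℝ × ℝ).2 - Z N i ω' (p : ℝ × ℝ).1) ∂μ)|)
        ≤ 1/((m:ℝ)+1) :=
    ae_all_iff.mpr fun m => main (1/((m:ℝ)+1)) (by positivity)
  filter_upwards [hcomb] with ω hω
  rw [Metric.tendsto_atTop]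
  intro ε hε
  obtain ⟨m, hm⟩ := exists_nat_one_div_lt hε
  obtain ⟨N₀, hN₀⟩ := (hω m).exists_forall_of_atTop
  refine ⟨N₀, fun n hn => ?_⟩
  have h1 := hN₀ n hn
  have h2 : (0:ℝ) ≤ ⨆ p : Tri T, |(1 / n : ℝ) * ∑ i,
      ((Z n i ω (p : ℝ × ℝ).2 - Z n i ω (p : ℝ × ℝ).1) -
       ∫ ω', (Z n i ω' (p : ℝ × ℝ).2 - Z n i ω' (p : ℝ × ℝ).1) ∂μ)| :=
    Real.iSup_nonneg fun p => abs_nonneg _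
  rw [Real.dist_eq, sub_zero, abs_of_nonneg h2]
  exact lt_of_le_of_lt h1 hm
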